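/- arXiv:1508.04073 — 2 statements merged into one kernel-verified Lean document; each statement's English description precedes it below -/
import Mathlib

section
/- Let D be a finite dataset of n points in the plane, sorted in increasing order by x-value, and let Q be a fixed partition of the points of D into rows (i.e., an assignment of a row label to each point). For a partition P of a set of points into columns, let H(P) denote the Shannon entropy of the probability vector whose entries are the fractions of points in each column, and let H(P,Q) denote the Shannon entropy of the probability vector whose entries are the fractions of points in each cell (column, row). For natural numbers m and l, define F(m,l) as the maximum of H(P) - H(P,Q) over all partitions P of the first m points D(1:m) into l columns (consecutive intervals in x-order). Then for every l > 1 and every m with 1 < m ≤ n, the recursion F(m,l) = max_{1 ≤ i < m} { (i/m)·F(i,l-1) - ((m-i)/m)·H(⟨i,m⟩, Q) } holds, where H(⟨i,m⟩, Q) denotes the Shannon entropy of the probability vector whose entries are the fractions, among the points i+1, i+2, …, m, that fall into each row of Q. -/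
open Real Finset

lemma aux_negMulLog_add_le {a b : ℝ} (ha : 0 ≤ a) (hb : 0 ≤ b) :
    Real.negMulLog (a + b) ≤ Real.negMulLog a + Real.negMulLog b := by
  have key : ∀ x y : ℝ, 0 ≤ x → 0 ≤ y → -(x * Real.log (x + y)) ≤ Real.negMulLog x := by
    intro x y hx hy
    rcases hx.eq_or_lt with h | h
    · simp [← h, Real.negMulLog]
    · have : Real.log x ≤ Real.log (x + y) :=
        Real.log_le_log h (by linarith)
      have := mul_le_mul_of_nonneg_left this hx
      simp only [Real.negMulLog, neg_mul]
      nlinarith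
  have h1 := key a b ha hb
  have h2 := key b a hb ha
  have : Real.negMulLog (a + b) = -(a * Real.log (a + b)) + -(b * Real.log (a + b)) := by
    simp only [Real.negMulLog, neg_mul]; ring
  rw [this, add_comm b a] at *
  linarith [h1, h2]

lemma aux_negMulLog_sum_le {α : Type*} (s : Finset α) (f : α → ℝ) (hf : ∀ x ∈ s, 0 ≤ f x) :
    Real.negMulLog (∑ x ∈ s, f x) ≤ ∑ x ∈ s, Real.negMulLog (f x) := by
  induction s using Finset.cons_induction with
  | empty => simp
  | cons a s ha ih =>
    rw [Finset.sum_cons, Finset.sum_cons]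
    have h1 : 0 ≤ f a := hf a (Finset.mem_cons_self a s)
    have h2 : 0 ≤ ∑ x ∈ s, f x :=
      Finset.sum_nonneg fun x hx => hf x (Finset.mem_cons_of_mem hx)
    calc Real.negMulLog (f a + ∑ x ∈ s, f x)
        ≤ Real.negMulLog (f a) + Real.negMulLog (∑ x ∈ s, f x) :=
          aux_negMulLog_add_le h1 h2
      _ ≤ Real.negMulLog (f a) + ∑ x ∈ s, Real.negMulLog (f x) := by
          linarith [ih (fun x hx => hf x (Finset.mem_cons_of_mem hx))]

lemma aux_mono {p : ℝ} (hp : 0 ≤ p) {q q' : ℝ} (hq : 0 ≤ q) (hqq : q ≤ q') :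
    Real.negMulLog q - Real.negMulLog (p + q) ≤
      Real.negMulLog q' - Real.negMulLog (p + q') := by
  rcases hp.eq_or_lt with rfl | hp'
  · simp
  have key : MonotoneOn (fun x : ℝ => Real.negMulLog x - Real.negMulLog (p + x))
      (Set.Ici 0) := by
    apply monotoneOn_of_deriv_nonneg (convex_Ici 0)
    · exact (Real.continuous_negMulLog.sub
        (Real.continuous_negMulLog.comp (continuous_const.add continuous_id))).continuousOn
    · intro x hx
      rw [interior_Ici] at hx
      have hx0 : x ≠ 0 := ne_of_gt hx
      have hpx : p + x ≠ 0 := by have := Set.mem_Ioi.mp hx; intro h; linarith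
      exact ((Real.differentiableAt_negMulLog hx0).sub
        ((Real.differentiableAt_negMulLog hpx).comp x
          ((differentiableAt_id.const_add p)))).differentiableWithinAt
    · intro x hx
      rw [interior_Ici] at hx
      have hx0 : (x:ℝ) ≠ 0 := ne_of_gt hx
      have hpx : p + x ≠ 0 := by have := Set.mem_Ioi.mp hx; intro h; linarith
      have h1 : HasDerivAt (fun x : ℝ => Real.negMulLog x - Real.negMulLog (p + x))
          ((- Real.log x - 1) - (- Real.log (p + x) - 1) * 1) x := by
        exact (Real.hasDerivAt_negMulLog hx0).sub
          ((Real.hasDerivAt_negMulLog hpx).comp x ((hasDerivAt_id x).const_add p))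
      rw [h1.deriv]
      have : Real.log x ≤ Real.log (p + x) := Real.log_le_log hx (by linarith)
      linarith
  exact key hq (le_trans hq hqq) hqq

lemma aux_card_interval (n a c : ℕ) (hcn : c ≤ n) :
    ((Finset.univ.filter (fun t : Fin n => a ≤ (t : ℕ) ∧ (t : ℕ) < c)).card) = c - a := by
  rw [← Nat.card_Ico a c]
  apply Finset.card_bij (fun (t : Fin n) _ => (t : ℕ))
  · intro t ht
    simp only [Finset.mem_filter] at ht
    exact Finset.mem_Ico.mpr ⟨ht.2.1, ht.2.2⟩
  · intro t1 h1 t2 h2 h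
    exact Fin.ext h
  · intro x hx
    rw [Finset.mem_Ico] at hx
    exact ⟨⟨x, lt_of_lt_of_le hx.2 hcn⟩, by simp [hx.1, hx.2], rfl⟩

lemma aux_sum_cell (n r : ℕ) (Q : Fin n → Fin r) (a c : ℕ) :
    (∑ i : Fin r, ((Finset.univ.filter (fun t : Fin n =>
        a ≤ (t : ℕ) ∧ (t : ℕ) < c ∧ Q t = i)).card))
      = (Finset.univ.filter (fun t : Fin n => a ≤ (t : ℕ) ∧ (t : ℕ) < c)).card := by
  rw [Finset.card_eq_sum_card_fiberwise (f := Q) (t := Finset.univ)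
    (fun t _ => Finset.mem_univ (Q t))]
  apply Finset.sum_congr rfl
  intro i _
  congr 1
  rw [Finset.filter_filter]
  apply Finset.filter_congr
  intro t _
  tauto

lemma aux_cell_le (n r : ℕ) (Q : Fin n → Fin r) (a c : ℕ) (hcn : c ≤ n) (i : Fin r) :
    ((Finset.univ.filter (fun t : Fin n =>
        a ≤ (t : ℕ) ∧ (t : ℕ) < c ∧ Q t = i)).card) ≤ c - a := by
  rw [← aux_card_interval n a c hcn]
  apply Finset.card_le_card
  intro t ht
  simp only [Finset.mem_filter] at *
  tauto

lemma aux_cell_singleton (n r : ℕ) (Q : Fin n → Fin r) (j : ℕ) (hj : j < n) (i : Fin r) :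
    ((Finset.univ.filter (fun t : Fin n =>
        j ≤ (t : ℕ) ∧ (t : ℕ) < j + 1 ∧ Q t = i)).card)
      = if Q ⟨j, hj⟩ = i then 1 else 0 := by
  have : (Finset.univ.filter (fun t : Fin n => j ≤ (t : ℕ) ∧ (t : ℕ) < j + 1 ∧ Q t = i))
      = if Q ⟨j, hj⟩ = i then {⟨j, hj⟩} else ∅ := by
    split_ifs with h
    · ext t
      simp only [Finset.mem_filter, Finset.mem_univ, true_and, Finset.mem_singleton,
        Fin.ext_iff, Fin.val_mk]
      constructor
      · rintro ⟨h1, h2, h3⟩; omega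
      · rintro ht
        have ht' : t = ⟨j, hj⟩ := Fin.ext (by simpa using ht)
        subst ht'
        exact ⟨le_refl _, by simp, by rw [h]⟩
    · ext t
      simp only [Finset.mem_filter, Finset.mem_univ, true_and, Finset.notMem_empty,
        iff_false]
      rintro ⟨h1, h2, h3⟩
      have ht' : t = ⟨j, hj⟩ := Fin.ext (by simp; omega)
      exact h (ht' ▸ h3)
  rw [this]
  split_ifs <;> simp

def auxCell (n r : ℕ) (Q : Fin n → Fin r) (a c : ℕ) (i : Fin r) : ℕ :=
  (Finset.univ.filter (fun t : Fin n => a ≤ (t : ℕ) ∧ (t : ℕ) < c ∧ Q t = i)).card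

noncomputable def auxColv (n r : ℕ) (Q : Fin n → Fin r) (m : ℝ) (a c : ℕ) : ℝ :=
  Real.negMulLog (((c : ℝ) - (a : ℝ)) / m)
    - ∑ i : Fin r, Real.negMulLog ((auxCell n r Q a c i : ℝ) / m)

noncomputable def auxVal (n r : ℕ) (Q : Fin n → Fin r) (m : ℝ) (l : ℕ)
    (b : Fin (l + 1) → ℕ) : ℝ :=
  ∑ j : Fin l, auxColv n r Q m (b j.castSucc) (b j.succ)

def auxSet (n r : ℕ) (Q : Fin n → Fin r) (m l : ℕ) : Set ℝ :=
  { v : ℝ | ∃ b : Fin (l + 1) → ℕ, StrictMono b ∧ b 0 = 0 ∧ b (Fin.last l) = m ∧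
      v = auxVal n r Q (m : ℝ) l b }

lemma aux_set_eq (n r : ℕ) (Q : Fin n → Fin r) (m l : ℕ) :
    { v : ℝ | ∃ b : Fin (l + 1) → ℕ, StrictMono b ∧ b 0 = 0 ∧ b (Fin.last l) = m ∧
      v = (∑ j : Fin l, Real.negMulLog (((b j.succ : ℝ) - (b j.castSucc : ℝ)) / m))
        - (∑ j : Fin l, ∑ i : Fin r, Real.negMulLog
            (((Finset.univ.filter (fun t : Fin n =>
                b j.castSucc ≤ (t : ℕ) ∧ (t : ℕ) < b j.succ ∧ Q t = i)).card : ℝ) / m)) }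
      = auxSet n r Q m l := by
  ext v
  simp only [Set.mem_setOf_eq, auxSet, auxVal, auxColv, auxCell]
  constructor <;> rintro ⟨b, h1, h2, h3, h4⟩ <;>
    exact ⟨b, h1, h2, h3, by rw [h4, ← Finset.sum_sub_distrib]⟩

lemma aux_sum_cell_real (n r : ℕ) (Q : Fin n → Fin r) (a c : ℕ) (hac : a ≤ c) (hcn : c ≤ n) :
    ∑ i : Fin r, ((auxCell n r Q a c i : ℝ)) = (c : ℝ) - a := by
  rw [← Nat.cast_sum]
  unfold auxCell
  rw [aux_sum_cell n r Q a c, aux_card_interval n a c hcn]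
  push_cast [Nat.cast_sub hac]
  ring

lemma aux_colv_rescale (n r : ℕ) (Q : Fin n → Fin r) (a c : ℕ) (hac : a ≤ c) (hcn : c ≤ n)
    {C : ℝ} (hC : C ≠ 0) (m : ℝ) :
    auxColv n r Q m a c = (C / m) * auxColv n r Q C a c := by
  have key : ∀ x : ℝ, Real.negMulLog (x / m)
      = (C / m) * Real.negMulLog (x / C) + (x / C) * Real.negMulLog (C / m) := by
    intro x
    have hx : x / m = (x / C) * (C / m) := by
      rw [div_mul_div_comm, mul_comm C m, mul_div_mul_right x m hC]
    rw [hx, Real.negMulLog_mul]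
  have hsum := aux_sum_cell_real n r Q a c hac hcn
  simp only [auxColv]
  rw [key (((c : ℝ) - a))]
  have h2 : ∑ i : Fin r, Real.negMulLog ((auxCell n r Q a c i : ℝ) / m)
      = (C / m) * ∑ i : Fin r, Real.negMulLog ((auxCell n r Q a c i : ℝ) / C)
        + (((c : ℝ) - a) / C) * Real.negMulLog (C / m) := by
    rw [Finset.sum_congr rfl (fun i _ => key ((auxCell n r Q a c i : ℝ))),
      Finset.sum_add_distrib, ← Finset.mul_sum]
    congr 1
    rw [← Finset.sum_mul, ← Finset.sum_div, hsum]
  rw [h2]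
  ring

lemma aux_colv_entropy (n r : ℕ) (Q : Fin n → Fin r) (a c : ℕ) (hac : a < c) (hcn : c ≤ n)
    (m : ℝ) :
    auxColv n r Q m a c
      = -((((c : ℝ) - a)) / m) * ∑ i : Fin r,
          Real.negMulLog ((auxCell n r Q a c i : ℝ) / ((c : ℝ) - a)) := by
  have hC : ((c : ℝ) - a) ≠ 0 := by
    have : (a : ℝ) < c := by exact_mod_cast hac
    linarith
  rw [aux_colv_rescale n r Q a c hac.le hcn hC m]
  simp only [auxColv]
  rw [div_self hC, Real.negMulLog_one]
  ring

lemma aux_colv_nonpos (n r : ℕ) (Q : Fin n → Fin r) (a c : ℕ) (hac : a ≤ c) (hcn : c ≤ n)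
    {m : ℝ} (hm : 0 ≤ m) :
    auxColv n r Q m a c ≤ 0 := by
  simp only [auxColv, sub_nonpos]
  have hsum : (((c : ℝ) - a) / m) = ∑ i : Fin r, ((auxCell n r Q a c i : ℝ) / m) := by
    rw [← Finset.sum_div, aux_sum_cell_real n r Q a c hac hcn]
  rw [hsum]
  exact aux_negMulLog_sum_le _ _ (fun i _ => by positivity)

lemma aux_colv_singleton (n r : ℕ) (Q : Fin n → Fin r) (j : ℕ) (hj : j < n) (m : ℝ) :
    auxColv n r Q m j (j + 1) = 0 := by
  simp only [auxColv]
  have key : ∀ i : Fin r, Real.negMulLog ((auxCell n r Q j (j + 1) i : ℝ) / m)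
      = if i = Q ⟨j, hj⟩ then Real.negMulLog (1 / m) else 0 := by
    intro i
    unfold auxCell
    rw [aux_cell_singleton n r Q j hj i]
    by_cases h : Q ⟨j, hj⟩ = i
    · subst h
      simp
    · have h' : ¬ (i = Q ⟨j, hj⟩) := fun hh => h hh.symm
      simp [h, h']
  rw [Finset.sum_congr rfl (fun i _ => key i), Finset.sum_ite_eq' Finset.univ (Q ⟨j, hj⟩)]
  simp only [Finset.mem_univ, if_true]
  push_cast
  ring_nf

lemma aux_cell_split (n r : ℕ) (Q : Fin n → Fin r) (j c : ℕ) (hj : j < c) (i : Fin r) :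
    auxCell n r Q j c i = auxCell n r Q j (j + 1) i + auxCell n r Q (j + 1) c i := by
  unfold auxCell
  rw [← Finset.card_union_of_disjoint, ← Finset.filter_or]
  · congr 1
    apply Finset.filter_congr
    intro t _
    constructor
    · rintro ⟨h1, h2, h3⟩
      by_cases h : (t : ℕ) < j + 1
      · exact Or.inl ⟨h1, h, h3⟩
      · exact Or.inr ⟨by omega, h2, h3⟩
    · rintro (⟨h1, h2, h3⟩ | ⟨h1, h2, h3⟩)
      · exact ⟨h1, by omega, h3⟩
      · exact ⟨by omega, h2, h3⟩
  · rw [Finset.disjoint_left]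
    intro t ht1 ht2
    simp only [Finset.mem_filter] at ht1 ht2
    omega

lemma aux_W_step (n r : ℕ) (Q : Fin n → Fin r) (m j : ℕ) (hmn : m ≤ n) (hj : j + 1 < m) :
    auxColv n r Q (m : ℝ) j m ≤ auxColv n r Q (m : ℝ) (j + 1) m := by
  have hjn : j < n := by omega
  have hm0 : (0 : ℝ) < m := by exact_mod_cast (by omega : 0 < m)
  set s := Q ⟨j, hjn⟩ with hs
  set c := auxCell n r Q (j + 1) m s with hc
  have hcle : c ≤ m - (j + 1) := aux_cell_le n r Q (j + 1) m hmn s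
  have hsplit : ∀ i : Fin r, (auxCell n r Q j m i : ℝ)
      = (if i = s then (1 : ℝ) else 0) + auxCell n r Q (j + 1) m i := by
    intro i
    rw [aux_cell_split n r Q j m (by omega) i]
    unfold auxCell
    rw [aux_cell_singleton n r Q j hjn i]
    by_cases h : i = s
    · subst h
      simp [hs]
    · have h' : ¬ (Q ⟨j, hjn⟩ = i) := fun hh => h (by rw [← hh, hs])
      simp [h, h']
  have hdiff : ∑ i : Fin r, Real.negMulLog ((auxCell n r Q j m i : ℝ) / m)
      = ∑ i : Fin r, Real.negMulLog ((auxCell n r Q (j + 1) m i : ℝ) / m)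
        + (Real.negMulLog (((c : ℝ) + 1) / m) - Real.negMulLog ((c : ℝ) / m)) := by
    have key : ∀ i : Fin r, Real.negMulLog ((auxCell n r Q j m i : ℝ) / m)
        = Real.negMulLog ((auxCell n r Q (j + 1) m i : ℝ) / m)
          + (if i = s then
              Real.negMulLog (((c : ℝ) + 1) / m) - Real.negMulLog ((c : ℝ) / m) else 0) := by
      intro i
      rw [hsplit i]
      by_cases h : i = s
      · subst h
        simp only [eq_self_iff_true, if_true]
        rw [← hc]
        ring_nf
      · simp only [if_neg h]
        simp
    rw [Finset.sum_congr rfl (fun i _ => key i), Finset.sum_add_distrib,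
      Finset.sum_ite_eq' Finset.univ s]
    simp
  simp only [auxColv]
  rw [hdiff]
  have hm' : (m : ℝ) ≠ 0 := ne_of_gt hm0
  have hcast : (c : ℝ) ≤ (m : ℝ) - ((j : ℝ) + 1) := by
    have h2 : (c : ℝ) ≤ ((m - (j + 1) : ℕ) : ℝ) := by exact_mod_cast hcle
    push_cast [Nat.cast_sub (by omega : j + 1 ≤ m)] at h2
    linarith
  have hmono := aux_mono (p := 1 / (m : ℝ)) (by positivity)
    (q := (c : ℝ) / m) (q' := ((m : ℝ) - ((j : ℝ) + 1)) / m)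
    (by positivity)
    (by gcongr)
  have e1 : 1 / (m : ℝ) + (c : ℝ) / m = ((c : ℝ) + 1) / m := by ring
  have e2 : 1 / (m : ℝ) + ((m : ℝ) - ((j : ℝ) + 1)) / m = ((m : ℝ) - j) / m := by
    field_simp
    ring
  rw [e1, e2] at hmono
  push_cast
  linarith

lemma aux_W_mono (n r : ℕ) (Q : Fin n → Fin r) (m : ℕ) (hmn : m ≤ n) {i j : ℕ}
    (hij : i ≤ j) (hj : j < m) :
    auxColv n r Q (m : ℝ) i m ≤ auxColv n r Q (m : ℝ) j m := by
  induction j, hij using Nat.le_induction with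
  | base => exact le_rfl
  | succ j hij ih =>
    exact le_trans (ih (by omega)) (aux_W_step n r Q m j hmn (by omega))

lemma aux_le_strictMono {l : ℕ} (b : Fin (l + 1) → ℕ) (hb : StrictMono b) (h0 : b 0 = 0)
    (j : Fin (l + 1)) : (j : ℕ) ≤ b j := by
  induction j using Fin.induction with
  | zero => simp [h0]
  | succ j ih =>
    have := hb (Fin.castSucc_lt_succ : j.castSucc < j.succ)
    simp only [Fin.coe_castSucc] at ih
    simp only [Fin.val_succ]
    omega

lemma aux_val_nonpos (n r : ℕ) (Q : Fin n → Fin r) (m l : ℕ) (hmn : m ≤ n)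
    (b : Fin (l + 1) → ℕ) (hb : StrictMono b) (hlast : b (Fin.last l) = m) :
    auxVal n r Q (m : ℝ) l b ≤ 0 := by
  apply Finset.sum_nonpos
  intro j _
  apply aux_colv_nonpos n r Q _ _ (hb (Fin.castSucc_lt_succ : j.castSucc < j.succ)).le
    (le_trans (hb.monotone (Fin.le_last j.succ)) (le_of_eq hlast) |>.trans hmn)
    (by positivity)

lemma aux_bddAbove (n r : ℕ) (Q : Fin n → Fin r) (m l : ℕ) (hmn : m ≤ n) :
    BddAbove (auxSet n r Q m l) := by
  refine ⟨0, ?_⟩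
  rintro v ⟨b, hb, h0, hlast, rfl⟩
  exact aux_val_nonpos n r Q m l hmn b hb hlast

lemma aux_sSup_nonpos (n r : ℕ) (Q : Fin n → Fin r) (m l : ℕ) (hmn : m ≤ n) :
    sSup (auxSet n r Q m l) ≤ 0 := by
  apply Real.sSup_le _ le_rfl
  rintro v ⟨b, hb, h0, hlast, rfl⟩
  exact aux_val_nonpos n r Q m l hmn b hb hlast

lemma aux_empty (n r : ℕ) (Q : Fin n → Fin r) (m l : ℕ) (hml : m < l) :
    auxSet n r Q m l = ∅ := by
  rw [Set.eq_empty_iff_forall_notMem]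
  rintro v ⟨b, hb, h0, hlast, rfl⟩
  have := aux_le_strictMono b hb h0 (Fin.last l)
  rw [hlast] at this
  simp only [Fin.val_last] at this
  omega

lemma aux_witness (n r : ℕ) (Q : Fin n → Fin r) (m l : ℕ) (hl : 1 ≤ l) (hlm : l ≤ m)
    (hmn : m ≤ n) :
    ∃ b : Fin (l + 1) → ℕ, StrictMono b ∧ b 0 = 0 ∧ b (Fin.last l) = m ∧
      auxVal n r Q (m : ℝ) l b = auxColv n r Q (m : ℝ) (l - 1) m := by
  refine ⟨fun j => if (j : ℕ) < l then (j : ℕ) else m, ?_, ?_, ?_, ?_⟩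
  · intro j j' h
    have hj' : (j : ℕ) < (j' : ℕ) := h
    by_cases h2 : (j' : ℕ) < l
    · simp only [if_pos (lt_trans hj' h2), if_pos h2]
      exact hj'
    · have : (j : ℕ) < l := by omega
      simp only [if_pos this, if_neg h2]
      omega
  · simp only [Fin.val_zero]
    exact if_pos (by omega : 0 < l)
  · simp only [Fin.val_last]
    simp
  · unfold auxVal
    have key : ∀ j : Fin l,
        auxColv n r Q (m : ℝ)
          ((fun j : Fin (l+1) => if (j : ℕ) < l then (j : ℕ) else m) j.castSucc)
          ((fun j : Fin (l+1) => if (j : ℕ) < l then (j : ℕ) else m) j.succ)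
        = if j = ⟨l - 1, by omega⟩ then auxColv n r Q (m : ℝ) (l - 1) m else 0 := by
      intro j
      have hjl : (j : ℕ) < l := j.isLt
      simp only [Fin.coe_castSucc, Fin.val_succ, if_pos hjl]
      by_cases h : (j : ℕ) = l - 1
      · have : j = ⟨l - 1, by omega⟩ := Fin.ext h
        rw [if_pos this]
        have : ¬ ((j : ℕ) + 1 < l) := by omega
        rw [if_neg this, h]
      · have hne : ¬ (j = ⟨l - 1, by omega⟩) := fun hh => h (by rw [hh])
        rw [if_neg hne]
        have : (j : ℕ) + 1 < l := by omega
        rw [if_pos this]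
        exact aux_colv_singleton n r Q (j : ℕ) (by omega) (m : ℝ)
    rw [Finset.sum_congr rfl (fun j _ => key j), Finset.sum_ite_eq' Finset.univ]
    simp

lemma aux_val_decomp (n r : ℕ) (Q : Fin n → Fin r) (k m : ℕ) (hmn : m ≤ n)
    (b : Fin (k + 3) → ℕ) (hb : StrictMono b) (h0 : b 0 = 0)
    (hlast : b (Fin.last (k + 2)) = m) :
    auxVal n r Q (m : ℝ) (k + 2) b
      = ((b ((Fin.last (k + 1)).castSucc) : ℝ) / m)
          * auxVal n r Q (b ((Fin.last (k + 1)).castSucc) : ℝ) (k + 1) (b ∘ Fin.castSucc)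
        + auxColv n r Q (m : ℝ) (b ((Fin.last (k + 1)).castSucc)) m := by
  have hi1 : 1 ≤ b ((Fin.last (k + 1)).castSucc) := by
    have := aux_le_strictMono b hb h0 ((Fin.last (k + 1)).castSucc)
    simp only [Fin.coe_castSucc, Fin.val_last] at this
    omega
  have hiR : ((b ((Fin.last (k + 1)).castSucc) : ℝ)) ≠ 0 := by
    exact_mod_cast (by omega : b ((Fin.last (k + 1)).castSucc) ≠ 0)
  unfold auxVal
  rw [Fin.sum_univ_castSucc]
  have hcols : ∀ j : Fin (k + 1),
      auxColv n r Q (m : ℝ) (b (j.castSucc).castSucc) (b (j.castSucc).succ)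
        = ((b ((Fin.last (k + 1)).castSucc) : ℝ) / m)
            * auxColv n r Q (b ((Fin.last (k + 1)).castSucc) : ℝ)
                ((b ∘ Fin.castSucc) j.castSucc) ((b ∘ Fin.castSucc) j.succ) := by
    intro j
    rw [Fin.succ_castSucc]
    have hac : b (j.castSucc.castSucc) ≤ b (j.succ.castSucc) :=
      hb.monotone (by
        simp only [Fin.castSucc_le_castSucc_iff]
        exact (Fin.castSucc_lt_succ : j.castSucc < j.succ).le)
    have hcn : b (j.succ.castSucc) ≤ n := by
      calc b (j.succ.castSucc) ≤ b (Fin.last (k + 2)) := hb.monotone (Fin.le_last _)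
        _ = m := hlast
        _ ≤ n := hmn
    exact aux_colv_rescale n r Q _ _ hac hcn hiR (m : ℝ)
  rw [Finset.sum_congr rfl (fun j _ => hcols j), ← Finset.mul_sum, Fin.succ_last, hlast]

lemma aux_snoc_props (k m i : ℕ) (him : i < m) (b' : Fin (k + 2) → ℕ)
    (hb : StrictMono b') (hlast : b' (Fin.last (k + 1)) = i) :
    StrictMono (Fin.snoc b' m : Fin (k + 3) → ℕ) ∧
      (Fin.snoc b' m : Fin (k + 3) → ℕ) 0 = b' 0 ∧
      (Fin.snoc b' m : Fin (k + 3) → ℕ) (Fin.last (k + 2)) = m ∧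
      (Fin.snoc b' m : Fin (k + 3) → ℕ) ∘ Fin.castSucc = b' := by
  have hcomp : (Fin.snoc b' m : Fin (k + 3) → ℕ) ∘ Fin.castSucc = b' := by
    funext j
    simp [Fin.snoc_castSucc]
  refine ⟨?_, ?_, by simp [Fin.snoc_last], hcomp⟩
  · intro a c h
    rcases Fin.eq_castSucc_or_eq_last c with ⟨c', rfl⟩ | rfl
    · rcases Fin.eq_castSucc_or_eq_last a with ⟨a', rfl⟩ | rfl
      · rw [Fin.snoc_castSucc, Fin.snoc_castSucc]
        exact hb (Fin.castSucc_lt_castSucc_iff.mp h)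
      · exfalso
        have hc := c'.isLt
        simp only [Fin.lt_iff_val_lt_val, Fin.coe_castSucc, Fin.val_last] at h
        omega
    · rcases Fin.eq_castSucc_or_eq_last a with ⟨a', rfl⟩ | rfl
      · rw [Fin.snoc_castSucc, Fin.snoc_last]
        calc b' a' ≤ b' (Fin.last _) := hb.monotone (Fin.le_last a')
          _ = i := hlast
          _ < m := him
      · exact absurd h (lt_irrefl _)
  · have : (0 : Fin (k + 3)) = Fin.castSucc 0 := by simp
    rw [this, Fin.snoc_castSucc]



/-!
STATEMENT 0: the dynamic-programming recursion for
`F(m,l) = max over column partitions P of the first m points into l columns of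
  H(P) - H(P,Q)`, namely
`F(m,l) = max_{1 ≤ i < m} { (i/m)·F(i,l-1) - ((m-i)/m)·H(⟨i,m⟩,Q) }`.

The `n` data points are indexed (in increasing x-order) by `Fin n`, and the row
partition `Q` assigns to each point one of `r` row labels.  A column partition of
the first `m` points into `l` columns is encoded by its strictly increasing
sequence of boundaries `b : Fin (l+1) → ℕ` with `b 0 = 0` and `b l = m`; the
`j`-th column consists of the points `t` with `b j ≤ t < b (j+1)`.
-/
theorem stmt0 (n r : ℕ) (Q : Fin n → Fin r)
    (F : ℕ → ℕ → ℝ)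
    (hF : ∀ m l : ℕ, F m l = sSup { v : ℝ |
      ∃ b : Fin (l + 1) → ℕ, StrictMono b ∧ b 0 = 0 ∧ b (Fin.last l) = m ∧
        v = (∑ j : Fin l, Real.negMulLog (((b j.succ : ℝ) - (b j.castSucc : ℝ)) / m))
          - (∑ j : Fin l, ∑ i : Fin r, Real.negMulLog
              (((Finset.univ.filter (fun t : Fin n =>
                  b j.castSucc ≤ (t : ℕ) ∧ (t : ℕ) < b j.succ ∧ Q t = i)).card : ℝ) / m)) })
    (l m : ℕ) (hl : 1 < l) (hm : 1 < m) (hmn : m ≤ n) :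
    F m l = (Finset.Ico 1 m).sup' (Finset.nonempty_Ico.mpr hm) (fun i =>
      ((i : ℝ) / m) * F i (l - 1)
        - (((m : ℝ) - i) / m) * (∑ rr : Fin r, Real.negMulLog
            (((Finset.univ.filter (fun t : Fin n =>
                i ≤ (t : ℕ) ∧ (t : ℕ) < m ∧ Q t = rr)).card : ℝ) / ((m : ℝ) - i)))) := by
  obtain ⟨k, rfl⟩ : ∃ k, l = k + 2 := ⟨l - 2, by omega⟩
  have hFs : ∀ m' l', F m' l' = sSup (auxSet n r Q m' l') := by
    intro m' l'
    rw [hF m' l', aux_set_eq]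
  have hm0 : (0 : ℝ) < m := by exact_mod_cast (by omega : 0 < m)
  set g : ℕ → ℝ := fun i => ((i : ℝ) / m) * F i (k + 1) + auxColv n r Q (m : ℝ) i m with hg
  have hgoal : (Finset.Ico 1 m).sup' (Finset.nonempty_Ico.mpr hm) (fun i =>
      ((i : ℝ) / m) * F i (k + 2 - 1)
        - (((m : ℝ) - i) / m) * (∑ rr : Fin r, Real.negMulLog
            (((Finset.univ.filter (fun t : Fin n =>
                i ≤ (t : ℕ) ∧ (t : ℕ) < m ∧ Q t = rr)).card : ℝ) / ((m : ℝ) - i))))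
      = (Finset.Ico 1 m).sup' (Finset.nonempty_Ico.mpr hm) g := by
    apply Finset.sup'_congr _ rfl
    intro i hi
    rw [Finset.mem_Ico] at hi
    rw [hg]
    simp only [show k + 2 - 1 = k + 1 from rfl]
    rw [aux_colv_entropy n r Q i m hi.2 hmn]
    simp only [auxCell]
    ring
  rw [hgoal, hFs m (k + 2)]
  have hbdd := aux_bddAbove n r Q m (k + 2) hmn
  apply le_antisymm
  · -- sSup ≤ sup'
    by_cases hne : (auxSet n r Q m (k + 2)).Nonempty
    · apply csSup_le hne
      rintro v ⟨b, hb, h0, hlast, rfl⟩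
      have hdec := aux_val_decomp n r Q k m hmn b hb h0 hlast
      set i := b ((Fin.last (k + 1)).castSucc) with hi
      have hi1 : 1 ≤ i := by
        have := aux_le_strictMono b hb h0 ((Fin.last (k + 1)).castSucc)
        simp only [Fin.coe_castSucc, Fin.val_last] at this
        omega
      have him : i < m := by
        have := hb (Fin.castSucc_lt_last (Fin.last (k + 1)))
        rwa [hlast] at this
      have hmem' : auxVal n r Q (i : ℝ) (k + 1) (b ∘ Fin.castSucc)
          ∈ auxSet n r Q i (k + 1) := by
        refine ⟨b ∘ Fin.castSucc, hb.comp Fin.strictMono_castSucc, ?_, rfl, rfl⟩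
        show b (Fin.castSucc 0) = 0
        rwa [Fin.castSucc_zero]
      have hle : auxVal n r Q (i : ℝ) (k + 1) (b ∘ Fin.castSucc) ≤ F i (k + 1) := by
        rw [hFs i (k + 1)]
        exact le_csSup (aux_bddAbove n r Q i (k + 1) (by omega)) hmem'
      have hgi : auxVal n r Q (m : ℝ) (k + 2) b ≤ g i := by
        rw [hdec, hg]
        have h1 : (0 : ℝ) ≤ (i : ℝ) / m := by positivity
        have := mul_le_mul_of_nonneg_left hle h1
        linarith
      exact le_trans hgi (Finset.le_sup' g (Finset.mem_Ico.mpr ⟨by omega, by omega⟩))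
    · rw [Set.not_nonempty_iff_eq_empty.mp hne, Real.sSup_empty]
      have hml : m < k + 2 := by
        by_contra h
        push_neg at h
        obtain ⟨b, p1, p2, p3, _⟩ := aux_witness n r Q m (k + 2) (by omega) h hmn
        exact hne ⟨_, b, p1, p2, p3, rfl⟩
      have hF0 : F (m - 1) (k + 1) = 0 := by
        rw [hFs (m - 1) (k + 1), aux_empty n r Q (m - 1) (k + 1) (by omega), Real.sSup_empty]
      have hc0 : auxColv n r Q (m : ℝ) (m - 1) m = 0 := by
        have := aux_colv_singleton n r Q (m - 1) (by omega) (m : ℝ)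
        rwa [show m - 1 + 1 = m by omega] at this
      have hg0 : g (m - 1) = 0 := by
        rw [hg]
        simp only [hF0, hc0, mul_zero, zero_add, add_zero]
      calc (0 : ℝ) = g (m - 1) := hg0.symm
        _ ≤ _ := Finset.le_sup' g (Finset.mem_Ico.mpr ⟨by omega, by omega⟩)
  · -- sup' ≤ sSup
    apply Finset.sup'_le
    intro i hi
    rw [Finset.mem_Ico] at hi
    obtain ⟨hi1, him⟩ := hi
    rcases le_or_gt (k + 2) m with hlm | hml
    · by_cases hne' : (auxSet n r Q i (k + 1)).Nonempty
      · have key : ∀ v' ∈ auxSet n r Q i (k + 1),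
            ((i : ℝ) / m) * v' + auxColv n r Q (m : ℝ) i m
              ≤ sSup (auxSet n r Q m (k + 2)) := by
          rintro v' ⟨b', hb', h0', hlast', rfl⟩
          obtain ⟨hsm, hsz, hsl, hscomp⟩ := aux_snoc_props k m i him b' hb' hlast'
          have hz : (Fin.snoc b' m : Fin (k + 3) → ℕ) 0 = 0 := by rw [hsz, h0']
          have hmem : auxVal n r Q (m : ℝ) (k + 2) (Fin.snoc b' m)
              ∈ auxSet n r Q m (k + 2) := ⟨Fin.snoc b' m, hsm, hz, hsl, rfl⟩
          have hdec := aux_val_decomp n r Q k m hmn (Fin.snoc b' m) hsm hz hsl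
          have hip : (Fin.snoc b' m : Fin (k + 3) → ℕ) ((Fin.last (k + 1)).castSucc) = i := by
            rw [Fin.snoc_castSucc, hlast']
          rw [hscomp, hip] at hdec
          rw [← hdec]
          exact le_csSup hbdd hmem
        show ((i : ℝ) / m) * F i (k + 1) + auxColv n r Q (m : ℝ) i m
          ≤ sSup (auxSet n r Q m (k + 2))
        rw [hFs i (k + 1)]
        set X := sSup (auxSet n r Q m (k + 2)) with hX
        have hpos : (0 : ℝ) < (i : ℝ) / m := by
          have : (0 : ℝ) < (i : ℝ) := by exact_mod_cast (by omega : 0 < i)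
          positivity
        have hsle : sSup (auxSet n r Q i (k + 1))
            ≤ (X - auxColv n r Q (m : ℝ) i m) / ((i : ℝ) / m) := by
          apply csSup_le hne'
          intro v' hv'
          rw [le_div_iff₀ hpos]
          have := key v' hv'
          linarith [key v' hv']
        have h2 := mul_le_mul_of_nonneg_left hsle hpos.le
        rw [mul_div_cancel₀ _ (ne_of_gt hpos)] at h2
        linarith
      · have hFi : F i (k + 1) = 0 := by
          rw [hFs i (k + 1), Set.not_nonempty_iff_eq_empty.mp hne', Real.sSup_empty]
        have hik : i < k + 1 := by
          by_contra h
          push_neg at h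
          obtain ⟨b', p1, p2, p3, _⟩ := aux_witness n r Q i (k + 1) (by omega) h (by omega)
          exact hne' ⟨_, b', p1, p2, p3, rfl⟩
        obtain ⟨b, p1, p2, p3, p4⟩ := aux_witness n r Q m (k + 2) (by omega) hlm hmn
        have hmem : auxVal n r Q (m : ℝ) (k + 2) b ∈ auxSet n r Q m (k + 2) :=
          ⟨b, p1, p2, p3, rfl⟩
        have hWm := aux_W_mono n r Q m hmn (show i ≤ k + 1 by omega) (show k + 1 < m by omega)
        show ((i : ℝ) / m) * F i (k + 1) + auxColv n r Q (m : ℝ) i m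
          ≤ sSup (auxSet n r Q m (k + 2))
        rw [hFi, mul_zero, zero_add]
        calc auxColv n r Q (m : ℝ) i m
            ≤ auxColv n r Q (m : ℝ) (k + 1) m := hWm
          _ = auxVal n r Q (m : ℝ) (k + 2) b := by
              rw [p4]
              norm_num
          _ ≤ sSup (auxSet n r Q m (k + 2)) := le_csSup hbdd hmem
    · rw [aux_empty n r Q m (k + 2) hml, Real.sSup_empty]
      have h1 : F i (k + 1) ≤ 0 := by
        rw [hFs i (k + 1)]
        exact aux_sSup_nonpos n r Q i (k + 1) (by omega)
      have h2 : auxColv n r Q (m : ℝ) i m ≤ 0 :=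
        aux_colv_nonpos n r Q i m (by omega) hmn (by positivity)
      have h3 : (0 : ℝ) ≤ (i : ℝ) / m := by positivity
      have h4 := mul_nonpos_of_nonneg_of_nonpos h3 h1
      rw [hg]
      linarith
end

section
/- Let X be a random variable on [0,1] with a continuous probability density, let h : [0,1] → [0,1] be differentiable with |h'(x)| ≤ c for all x and some finite constant c, and let Y = h(X). For each integer ℓ ≥ 2, let P_ℓ = ⌊ℓX⌋ and Q_ℓ = ⌊ℓY⌋ be the discretizations of X and Y into ℓ equal-width bins. Then the normalized conditional entropy H(Q_ℓ | P_ℓ)/log ℓ converges to 0 as ℓ → ∞; in particular, conditioned on any single bin of X, the variable Q_ℓ is supported on at most ⌈c⌉ + 1 values. -/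
open MeasureTheory

/-- The discretization of a point `z ∈ [0,1]` into `ℓ` equal-width bins:
`⌊ℓ z⌋`, taking values in `{0, 1, …, ℓ-1}` (with value `ℓ-1` when `z = 1`). -/
noncomputable def bin (ℓ : ℕ) (z : ℝ) : ℕ := min ⌊(ℓ : ℝ) * z⌋₊ (ℓ - 1)


lemma measurable_bin (ℓ : ℕ) : Measurable (bin ℓ) := by
  unfold bin
  exact (measurable_id.const_mul _).nat_floor.min measurable_const

lemma bin_lt (ℓ : ℕ) (hℓ : 1 ≤ ℓ) (z : ℝ) : bin ℓ z < ℓ := by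
  unfold bin; omega

lemma bin_mem_Icc {ℓ k : ℕ} (hℓ : 1 ≤ ℓ) {x : ℝ} (hx : x ∈ Set.Icc (0:ℝ) 1)
    (hb : bin ℓ x = k) : (k : ℝ) / ℓ ≤ x ∧ x ≤ (k + 1) / ℓ := by
  have hℓ0 : (0:ℝ) < ℓ := by exact_mod_cast hℓ
  have hx0 : 0 ≤ (ℓ:ℝ) * x := mul_nonneg hℓ0.le hx.1
  unfold bin at hb
  rcases min_cases ⌊(ℓ : ℝ) * x⌋₊ (ℓ - 1) with ⟨he, hle⟩ | ⟨he, hlt⟩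
  · -- bin = ⌊ℓ x⌋₊ = k
    rw [he] at hb
    have h1 : (k:ℝ) ≤ (ℓ:ℝ) * x := by rw [← hb]; exact Nat.floor_le hx0
    have h2 : (ℓ:ℝ) * x < k + 1 := by
      rw [← hb]; push_cast; exact Nat.lt_floor_add_one _
    constructor
    · rw [div_le_iff₀ hℓ0]; linarith [h1]
    · rw [le_div_iff₀ hℓ0]; linarith [h2]
  · -- bin = ℓ - 1 = k, and ℓ - 1 < ⌊ℓ x⌋₊
    rw [he] at hb
    have hkℓ : (k:ℝ) = (ℓ:ℝ) - 1 := by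
      have : k + 1 = ℓ := by omega
      have := congrArg (Nat.cast (R := ℝ)) this
      push_cast at this; linarith
    constructor
    · have h1 : (k:ℝ) ≤ (ℓ:ℝ) * x := by
        calc (k:ℝ) ≤ (⌊(ℓ : ℝ) * x⌋₊ : ℝ) := by exact_mod_cast (by omega : k ≤ ⌊(ℓ : ℝ) * x⌋₊)
          _ ≤ (ℓ:ℝ) * x := Nat.floor_le hx0
      rw [div_le_iff₀ hℓ0]; linarith
    · rw [le_div_iff₀ hℓ0]; nlinarith [hx.2]

lemma sum_negMulLog_le {ι : Type*} (s : Finset ι) (p : ι → ℝ) (h0 : ∀ i ∈ s, 0 ≤ p i)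
    (h1 : ∑ i ∈ s, p i = 1) : ∑ i ∈ s, Real.negMulLog (p i) ≤ Real.log s.card := by
  have hne : s.Nonempty := by
    rcases Finset.eq_empty_or_nonempty s with h | h
    · simp [h] at h1
    · exact h
  have hn : (0:ℝ) < s.card := by exact_mod_cast hne.card_pos
  have hJ := Real.concaveOn_negMulLog.le_map_sum (t := s) (w := fun _ => (s.card:ℝ)⁻¹)
    (p := p) (fun i _ => by positivity) (by simp [Finset.sum_const]; field_simp)
    (fun i hi => h0 i hi)
  simp only [smul_eq_mul, ← Finset.mul_sum, h1, mul_one] at hJ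
  have hval : Real.negMulLog ((s.card:ℝ)⁻¹) = (s.card:ℝ)⁻¹ * Real.log s.card := by
    rw [Real.negMulLog, Real.log_inv]; ring
  rw [hval] at hJ
  calc ∑ i ∈ s, Real.negMulLog (p i)
      = (s.card:ℝ) * ((s.card:ℝ)⁻¹ * ∑ i ∈ s, Real.negMulLog (p i)) := by field_simp
    _ ≤ (s.card:ℝ) * ((s.card:ℝ)⁻¹ * Real.log s.card) := mul_le_mul_of_nonneg_left hJ hn.le
    _ = Real.log s.card := by field_simp

/-!
STATEMENT 4: if `X` is a random variable on `[0,1]` with a continuous probability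
density, `h : [0,1] → [0,1]` is differentiable with `|h'| ≤ c < ∞`, `Y = h(X)`, and
`P_ℓ = ⌊ℓX⌋`, `Q_ℓ = ⌊ℓY⌋` are the discretizations into `ℓ` equal-width bins, then
the normalized conditional entropy
`H(Q_ℓ | P_ℓ) / log ℓ = (∑_k ℙ(P_ℓ=k) H(Q_ℓ | P_ℓ=k)) / log ℓ → 0` as `ℓ → ∞`;
in particular, conditioned on any single bin `k` of `X`, the variable `Q_ℓ` is
supported on at most `⌈c⌉ + 1` values.
-/
theorem stmt4 {Ω : Type*} [MeasurableSpace Ω] (μ : Measure Ω) [IsProbabilityMeasure μ]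
    (X : Ω → ℝ) (hX : Measurable X) (hXrange : ∀ ω, X ω ∈ Set.Icc (0 : ℝ) 1)
    (f : ℝ → ℝ) (hfcont : ContinuousOn f (Set.Icc 0 1))
    (hdens : Measure.map X μ =
      (volume.restrict (Set.Icc (0 : ℝ) 1)).withDensity fun x => ENNReal.ofReal (f x))
    (h h' : ℝ → ℝ) (c : ℝ)
    (hderiv : ∀ x ∈ Set.Icc (0 : ℝ) 1, HasDerivAt h (h' x) x)
    (hc : ∀ x ∈ Set.Icc (0 : ℝ) 1, |h' x| ≤ c)
    (hrange : ∀ x ∈ Set.Icc (0 : ℝ) 1, h x ∈ Set.Icc (0 : ℝ) 1) :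
    Filter.Tendsto (fun ℓ : ℕ =>
      (∑ k ∈ Finset.range ℓ, (μ {ω | bin ℓ (X ω) = k}).toReal *
        ∑ j ∈ Finset.range ℓ, Real.negMulLog
          ((μ {ω | bin ℓ (h (X ω)) = j ∧ bin ℓ (X ω) = k}).toReal
            / (μ {ω | bin ℓ (X ω) = k}).toReal))
        / Real.log ℓ) Filter.atTop (nhds 0)
    ∧ ∀ ℓ : ℕ, 2 ≤ ℓ → ∀ k : ℕ,
        ((Finset.range ℓ).filter fun j =>
          μ {ω | bin ℓ (h (X ω)) = j ∧ bin ℓ (X ω) = k} ≠ 0).card ≤ ⌈c⌉₊ + 1 := by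
  have hc0 : 0 ≤ c := le_trans (abs_nonneg _) (hc 0 ⟨le_refl 0, zero_le_one⟩)
  set m := ⌈c⌉₊ with hm
  -- Lipschitz bound on [0,1]
  have hlip : ∀ x ∈ Set.Icc (0:ℝ) 1, ∀ y ∈ Set.Icc (0:ℝ) 1, |h x - h y| ≤ c * |x - y| := by
    intro x hx y hy
    have := Convex.norm_image_sub_le_of_norm_hasDerivWithin_le
      (f := h) (f' := h') (s := Set.Icc (0:ℝ) 1) (C := c)
      (fun z hz => (hderiv z hz).hasDerivWithinAt)
      (fun z hz => by simpa [Real.norm_eq_abs] using hc z hz)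
      (convex_Icc 0 1) hy hx
    simpa [Real.norm_eq_abs] using this
  -- key comparison of bins of h-values over the same X-bin
  have key : ∀ ℓ : ℕ, 2 ≤ ℓ → ∀ k j j' : ℕ,
      μ {ω | bin ℓ (h (X ω)) = j ∧ bin ℓ (X ω) = k} ≠ 0 →
      μ {ω | bin ℓ (h (X ω)) = j' ∧ bin ℓ (X ω) = k} ≠ 0 → j ≤ j' + m := by
    intro ℓ hℓ k j j' hj hj'
    obtain ⟨ω, hωj, hωk⟩ := nonempty_of_measure_ne_zero hj
    obtain ⟨ω', hω'j, hω'k⟩ := nonempty_of_measure_ne_zero hj'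
    have hℓ1 : 1 ≤ ℓ := by omega
    have hℓ0 : (0:ℝ) < ℓ := by exact_mod_cast hℓ1
    obtain ⟨ha1, ha2⟩ := bin_mem_Icc hℓ1 (hXrange ω) hωk
    obtain ⟨hb1, hb2⟩ := bin_mem_Icc hℓ1 (hXrange ω') hω'k
    have hdist : |X ω - X ω'| ≤ 1 / ℓ := by
      have e : ((k:ℝ)+1)/ℓ - (k:ℝ)/ℓ = 1/ℓ := by field_simp; ring
      rw [abs_le]; constructor <;> linarith
    have hhd : |h (X ω) - h (X ω')| ≤ c / ℓ := by
      calc |h (X ω) - h (X ω')| ≤ c * |X ω - X ω'| := hlip _ (hXrange ω) _ (hXrange ω')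
        _ ≤ c * (1 / ℓ) := by gcongr
        _ = c / ℓ := by ring
    have hy' : 0 ≤ h (X ω') := (hrange _ (hXrange ω')).1
    have hmul : (ℓ:ℝ) * h (X ω) ≤ (ℓ:ℝ) * h (X ω') + c := by
      have : h (X ω) ≤ h (X ω') + c / ℓ := by
        have := (abs_le.mp hhd).2; linarith
      calc (ℓ:ℝ) * h (X ω) ≤ (ℓ:ℝ) * (h (X ω') + c / ℓ) :=
            mul_le_mul_of_nonneg_left this hℓ0.le
        _ = (ℓ:ℝ) * h (X ω') + c := by field_simp
    have hfl : ⌊(ℓ:ℝ) * h (X ω)⌋₊ ≤ ⌊(ℓ:ℝ) * h (X ω')⌋₊ + m := by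
      calc ⌊(ℓ:ℝ) * h (X ω)⌋₊ ≤ ⌊(ℓ:ℝ) * h (X ω') + (m:ℝ)⌋₊ := by
            apply Nat.floor_mono
            have : c ≤ (m:ℝ) := Nat.le_ceil c
            linarith
        _ = ⌊(ℓ:ℝ) * h (X ω')⌋₊ + m := Nat.floor_add_natCast (by positivity) m
    have e1 : j = min ⌊(ℓ:ℝ) * h (X ω)⌋₊ (ℓ - 1) := hωj.symm
    have e2 : j' = min ⌊(ℓ:ℝ) * h (X ω')⌋₊ (ℓ - 1) := hω'j.symm
    omega
  -- Part 2: cardinality bound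
  have part2 : ∀ ℓ : ℕ, 2 ≤ ℓ → ∀ k : ℕ,
      ((Finset.range ℓ).filter fun j =>
        μ {ω | bin ℓ (h (X ω)) = j ∧ bin ℓ (X ω) = k} ≠ 0).card ≤ m + 1 := by
    intro ℓ hℓ k
    set S := (Finset.range ℓ).filter fun j =>
      μ {ω | bin ℓ (h (X ω)) = j ∧ bin ℓ (X ω) = k} ≠ 0 with hS
    rcases S.eq_empty_or_nonempty with he | hne
    · simp [he]
    · have hsub : S ⊆ Finset.Icc (S.min' hne) (S.min' hne + m) := by
        intro j hj
        rw [Finset.mem_Icc]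
        refine ⟨S.min'_le j hj, ?_⟩
        have h1 := (Finset.mem_filter.mp hj).2
        have h2 := (Finset.mem_filter.mp (S.min'_mem hne)).2
        exact key ℓ hℓ k j (S.min' hne) h1 h2
      calc S.card ≤ (Finset.Icc (S.min' hne) (S.min' hne + m)).card := Finset.card_le_card hsub
        _ = m + 1 := by rw [Nat.card_Icc]; omega
  -- measurability setup
  have hHcont : Continuous fun x : ℝ => h (min 1 (max 0 x)) := by
    have hcont : ContinuousOn h (Set.Icc (0:ℝ) 1) :=
      fun x hx => ((hderiv x hx).continuousAt).continuousWithinAt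
    apply hcont.comp_continuous (continuous_const.min (continuous_const.max continuous_id))
    intro x
    constructor
    · exact le_min zero_le_one (le_max_left 0 x)
    · exact min_le_left 1 _
  have hHX : ∀ ω, h (X ω) = h (min 1 (max 0 (X ω))) := by
    intro ω
    congr 1
    obtain ⟨h1, h2⟩ := hXrange ω
    rw [max_eq_right h1, min_eq_right h2]
  have hmeasB : ∀ ℓ k : ℕ, MeasurableSet {ω | bin ℓ (X ω) = k} := by
    intro ℓ k
    exact ((measurable_bin ℓ).comp hX) (measurableSet_singleton k)
  have hmeasA : ∀ ℓ j k : ℕ, MeasurableSet {ω | bin ℓ (h (X ω)) = j ∧ bin ℓ (X ω) = k} := by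
    intro ℓ j k
    have : {ω | bin ℓ (h (X ω)) = j ∧ bin ℓ (X ω) = k}
        = {ω | bin ℓ (h (min 1 (max 0 (X ω)))) = j} ∩ {ω | bin ℓ (X ω) = k} := by
      ext ω; simp [hHX ω, Set.mem_setOf_eq, Set.mem_inter_iff]
    rw [this]
    exact (((measurable_bin ℓ).comp (hHcont.measurable.comp hX))
      (measurableSet_singleton j)).inter (hmeasB ℓ k)
  -- partition sum
  have hpart : ∀ ℓ : ℕ, 1 ≤ ℓ → ∀ k : ℕ,
      ∑ j ∈ Finset.range ℓ, μ {ω | bin ℓ (h (X ω)) = j ∧ bin ℓ (X ω) = k}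
        = μ {ω | bin ℓ (X ω) = k} := by
    intro ℓ hℓ k
    rw [← measure_biUnion_finset]
    · congr 1
      ext ω
      simp only [Set.mem_iUnion, Set.mem_setOf_eq, Finset.mem_range]
      constructor
      · rintro ⟨j, _, _, hk⟩; exact hk
      · intro hk; exact ⟨bin ℓ (h (X ω)), bin_lt ℓ hℓ _, rfl, hk⟩
    · intro j _ j' _ hjj'
      apply Set.disjoint_left.mpr
      rintro ω ⟨hj, _⟩ ⟨hj', _⟩
      exact hjj' (hj ▸ hj'.symm ▸ rfl)
    · intro j _; exact hmeasA ℓ j k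
  have hBsum : ∀ ℓ : ℕ, 1 ≤ ℓ → ∑ k ∈ Finset.range ℓ, μ {ω | bin ℓ (X ω) = k} = 1 := by
    intro ℓ hℓ
    rw [← measure_biUnion_finset]
    · have : ⋃ k ∈ Finset.range ℓ, {ω | bin ℓ (X ω) = k} = Set.univ := by
        ext ω
        simp only [Set.mem_iUnion, Set.mem_setOf_eq, Finset.mem_range, Set.mem_univ, iff_true]
        exact ⟨bin ℓ (X ω), bin_lt ℓ hℓ _, rfl⟩
      rw [this, measure_univ]
    · intro k _ k' _ hkk'
      apply Set.disjoint_left.mpr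
      rintro ω hk hk'
      exact hkk' (hk ▸ hk'.symm ▸ rfl)
    · intro k _; exact hmeasB ℓ k
  -- entropy bound
  set L := Real.log (m + 1) with hL
  have hL0 : 0 ≤ L := Real.log_nonneg (by exact_mod_cast Nat.le_add_left 1 m)
  have hEnonneg : ∀ ℓ : ℕ, 0 ≤ ∑ k ∈ Finset.range ℓ, (μ {ω | bin ℓ (X ω) = k}).toReal *
      ∑ j ∈ Finset.range ℓ, Real.negMulLog
        ((μ {ω | bin ℓ (h (X ω)) = j ∧ bin ℓ (X ω) = k}).toReal
          / (μ {ω | bin ℓ (X ω) = k}).toReal) := by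
    intro ℓ
    apply Finset.sum_nonneg
    intro k _
    apply mul_nonneg ENNReal.toReal_nonneg
    apply Finset.sum_nonneg
    intro j _
    set a := (μ {ω | bin ℓ (h (X ω)) = j ∧ bin ℓ (X ω) = k}).toReal
    set b := (μ {ω | bin ℓ (X ω) = k}).toReal with hb
    rcases eq_or_lt_of_le (ENNReal.toReal_nonneg : 0 ≤ b) with h0 | h0
    · have hb0 : b = 0 := h0.symm
      rw [hb0, div_zero, Real.negMulLog_zero]
    · apply Real.negMulLog_nonneg (by positivity)
      rw [div_le_one h0]
      apply ENNReal.toReal_mono (measure_ne_top μ _)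
      exact measure_mono fun ω hω => hω.2
  have hEle : ∀ ℓ : ℕ, 2 ≤ ℓ →
      (∑ k ∈ Finset.range ℓ, (μ {ω | bin ℓ (X ω) = k}).toReal *
      ∑ j ∈ Finset.range ℓ, Real.negMulLog
        ((μ {ω | bin ℓ (h (X ω)) = j ∧ bin ℓ (X ω) = k}).toReal
          / (μ {ω | bin ℓ (X ω) = k}).toReal)) ≤ L := by
    intro ℓ hℓ
    have hstep : ∀ k ∈ Finset.range ℓ, (μ {ω | bin ℓ (X ω) = k}).toReal *
        (∑ j ∈ Finset.range ℓ, Real.negMulLog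
          ((μ {ω | bin ℓ (h (X ω)) = j ∧ bin ℓ (X ω) = k}).toReal
            / (μ {ω | bin ℓ (X ω) = k}).toReal))
        ≤ (μ {ω | bin ℓ (X ω) = k}).toReal * L := by
      intro k _
      rcases eq_or_ne (μ {ω | bin ℓ (X ω) = k}) 0 with hB0 | hB0
      · simp [hB0]
      · apply mul_le_mul_of_nonneg_left _ ENNReal.toReal_nonneg
        set B := {ω | bin ℓ (X ω) = k} with hBdef
        have hBtop : μ B ≠ ⊤ := measure_ne_top μ _
        have hBr : (μ B).toReal ≠ 0 := ENNReal.toReal_ne_zero.mpr ⟨hB0, hBtop⟩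
        set p : ℕ → ℝ := fun j =>
          (μ {ω | bin ℓ (h (X ω)) = j ∧ bin ℓ (X ω) = k}).toReal / (μ B).toReal with hp
        set S := (Finset.range ℓ).filter fun j =>
          μ {ω | bin ℓ (h (X ω)) = j ∧ bin ℓ (X ω) = k} ≠ 0 with hSdef
        have hrestr : ∀ g : ℝ → ℝ, g 0 = 0 →
            ∑ j ∈ Finset.range ℓ, g (p j) = ∑ j ∈ S, g (p j) := by
          intro g hg
          rw [hSdef]
          refine (Finset.sum_filter_of_ne ?_).symm
          intro j _ hne h0
          apply hne
          simp only [hp, h0, ENNReal.toReal_zero, zero_div, hg]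
        have hsum1 : ∑ j ∈ S, p j = 1 := by
          have e := hrestr (fun t => t) rfl
          rw [← e]
          simp only [hp]
          rw [← Finset.sum_div, ← ENNReal.toReal_sum (fun j _ => measure_ne_top μ _)]
          rw [hpart ℓ (by omega) k]
          exact div_self hBr
        have hineq : ∑ j ∈ S, Real.negMulLog (p j) ≤ Real.log S.card :=
          sum_negMulLog_le S p (fun j _ => by positivity) hsum1
        have hSne : S.Nonempty := by
          rcases S.eq_empty_or_nonempty with he | hne
          · rw [he] at hsum1; simp at hsum1
          · exact hne
        have hcard : S.card ≤ m + 1 := part2 ℓ hℓ k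
        calc ∑ j ∈ Finset.range ℓ, Real.negMulLog (p j)
            = ∑ j ∈ S, Real.negMulLog (p j) := hrestr Real.negMulLog Real.negMulLog_zero
          _ ≤ Real.log S.card := hineq
          _ ≤ L := by
              rw [hL]
              apply Real.log_le_log (by exact_mod_cast hSne.card_pos)
              exact_mod_cast hcard
    calc ∑ k ∈ Finset.range ℓ, (μ {ω | bin ℓ (X ω) = k}).toReal *
        ∑ j ∈ Finset.range ℓ, Real.negMulLog
          ((μ {ω | bin ℓ (h (X ω)) = j ∧ bin ℓ (X ω) = k}).toReal
            / (μ {ω | bin ℓ (X ω) = k}).toReal)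
        ≤ ∑ k ∈ Finset.range ℓ, (μ {ω | bin ℓ (X ω) = k}).toReal * L :=
          Finset.sum_le_sum hstep
      _ = (∑ k ∈ Finset.range ℓ, (μ {ω | bin ℓ (X ω) = k}).toReal) * L := by
          rw [Finset.sum_mul]
      _ = L := by
          rw [← ENNReal.toReal_sum (fun k _ => measure_ne_top μ _), hBsum ℓ (by omega)]
          simp
  constructor
  · apply squeeze_zero' (g := fun ℓ : ℕ => L / Real.log ℓ)
    · filter_upwards [Filter.eventually_ge_atTop 2] with ℓ hℓ
      have hlog : 0 < Real.log ℓ := by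
        apply Real.log_pos
        exact_mod_cast (by omega : 1 < ℓ)
      exact div_nonneg (hEnonneg ℓ) hlog.le
    · filter_upwards [Filter.eventually_ge_atTop 2] with ℓ hℓ
      have hlog : 0 < Real.log ℓ := by
        apply Real.log_pos
        exact_mod_cast (by omega : 1 < ℓ)
      exact (div_le_div_iff_of_pos_right hlog).mpr (hEle ℓ hℓ)
    · exact Filter.Tendsto.div_atTop tendsto_const_nhds
        (Real.tendsto_log_atTop.comp tendsto_natCast_atTop_atTop)
  · exact part2
end
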